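/- Let (Zₙ) be a multi-type bisexual Galton-Watson process with superadditive mating function. For all z₀, z̃₀, z₁, z̃₁ ∈ ℕ^p and n ≥ 1: P(Zₙ ≥ z₁ + z̃₁ | Z₀ = z₀ + z̃₀) ≥ P(Zₙ ≥ z₁ | Z₀ = z₀) · P(Zₙ ≥ z̃₁ | Z₀ = z̃₀), where ≥ between vectors is componentwise. -/

import Mathlib

open MeasureTheory ProbabilityTheory

set_option linter.unusedSectionVars false
set_option maxHeartbeats 1000000
open scoped ENNReal

section bGWaux

variable {Ω : Type*} [MeasurableSpace Ω] {μ : Measure Ω} {p q : ℕ}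

/-- The family of offspring random vectors, indexed by (type, individual, generation). -/
def bgwFam (V : Fin p → Fin q → ℕ → ℕ → Ω → ℕ) : Fin p × ℕ × ℕ → Ω → (Fin q → ℕ) :=
  fun x ω j => V x.1 j x.2.1 x.2.2 ω

/-- The σ-algebra generated by a set of indices of the offspring family. -/
def bgwSig (V : Fin p → Fin q → ℕ → ℕ → Ω → ℕ) (S : Set (Fin p × ℕ × ℕ)) :
    MeasurableSpace Ω :=
  ⨆ x ∈ S, MeasurableSpace.comap (bgwFam V x) inferInstance

/-- One step of the process, using individuals `[a i, a i + b i)` of generation `t`. -/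
def bgwStep (ξ : (Fin q → ℕ) → (Fin p → ℕ)) (V : Fin p → Fin q → ℕ → ℕ → Ω → ℕ)
    (a b : Fin p → ℕ) (t : ℕ) (ω : Ω) : Fin p → ℕ :=
  ξ fun j => ∑ i, ∑ k ∈ Finset.range (b i), V i j (a i + k) t ω

/-- The coupled second subpopulation process. -/
def bgwB (ξ : (Fin q → ℕ) → (Fin p → ℕ)) (V : Fin p → Fin q → ℕ → ℕ → Ω → ℕ)
    (A : ℕ → Ω → Fin p → ℕ) (z : Fin p → ℕ) : ℕ → Ω → Fin p → ℕ
  | 0 => fun _ => z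
  | m + 1 => fun ω => bgwStep ξ V (A m ω) (bgwB ξ V A z m ω) (m + 1) ω

/-- indices of generations `≤ m` -/
def bgwPast (p : ℕ) (m : ℕ) : Set (Fin p × ℕ × ℕ) := {x | x.2.2 ≤ m}

/-- indices of block `[a i, a i + b i)` of generation `t` -/
def bgwBlk (a b : Fin p → ℕ) (t : ℕ) : Set (Fin p × ℕ × ℕ) :=
  {x | x.2.2 = t ∧ a x.1 ≤ x.2.1 ∧ x.2.1 < a x.1 + b x.1}

variable {ξ : (Fin q → ℕ) → (Fin p → ℕ)} {V : Fin p → Fin q → ℕ → ℕ → Ω → ℕ}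

lemma bgwFam_meas (hVmeas : ∀ i j k n, Measurable (V i j k n)) (x : Fin p × ℕ × ℕ) :
    Measurable (bgwFam V x) :=
  measurable_pi_lambda _ fun j => hVmeas _ j _ _

lemma bgwSig_le (hVmeas : ∀ i j k n, Measurable (V i j k n)) (S : Set (Fin p × ℕ × ℕ)) :
    bgwSig V S ≤ ‹MeasurableSpace Ω› :=
  iSup₂_le fun x _ => (bgwFam_meas hVmeas x).comap_le

lemma bgwSig_mono {S T : Set (Fin p × ℕ × ℕ)} (h : S ⊆ T) : bgwSig V S ≤ bgwSig V T :=
  iSup₂_le fun x hx => le_iSup₂ (f := fun x (_ : x ∈ T) =>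
    MeasurableSpace.comap (bgwFam V x) inferInstance) x (h hx)

lemma measurable_bgwFam_sig {S : Set (Fin p × ℕ × ℕ)} {x : Fin p × ℕ × ℕ} (hx : x ∈ S) :
    Measurable[bgwSig V S] (bgwFam V x) :=
  measurable_iff_comap_le.2 (le_iSup₂ (f := fun x (_ : x ∈ S) =>
    MeasurableSpace.comap (bgwFam V x) inferInstance) x hx)

lemma measurable_V_sig {S : Set (Fin p × ℕ × ℕ)} {i : Fin p} {j : Fin q} {k t : ℕ}
    (hx : ((i, k, t) : Fin p × ℕ × ℕ) ∈ S) :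
    Measurable[bgwSig V S] fun ω => V i j k t ω :=
  ((measurable_pi_apply j).comp (measurable_bgwFam_sig hx) : _)

lemma measurable_bgwStep_sig (a b : Fin p → ℕ) (t : ℕ) :
    Measurable[bgwSig V (bgwBlk a b t)] (bgwStep ξ V a b t) := by
  have h : Measurable[bgwSig V (bgwBlk a b t)]
      (fun ω (j : Fin q) => ∑ i, ∑ k ∈ Finset.range (b i), V i j (a i + k) t ω) := by
    refine @measurable_pi_lambda Ω (Fin q) (fun _ => ℕ) (bgwSig V (bgwBlk a b t)) _ _ fun j => ?_
    apply Finset.measurable_sum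
    intro i _
    apply Finset.measurable_sum
    intro k hk
    exact measurable_V_sig ⟨rfl, Nat.le_add_right _ _,
      (by have := Finset.mem_range.1 hk; omega : a i + k < a i + b i)⟩
  exact (measurable_of_countable ξ).comp h

/-- helper: composing a countable-valued measurable parameter. -/
lemma bgw_meas_param {m' : MeasurableSpace Ω} {α β : Type*} [Countable α] [MeasurableSpace α]
    [MeasurableSingletonClass α] [Countable β] [MeasurableSpace β] [MeasurableSingletonClass β]
    {g : α → Ω → β} (hg : ∀ a, Measurable[m'] (g a)) {N : Ω → α} (hN : Measurable[m'] N) :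
    Measurable[m'] fun ω => g (N ω) ω := by
  apply measurable_to_countable'
  intro c
  have h : ((fun ω => g (N ω) ω) ⁻¹' {c}) = ⋃ a, (N ⁻¹' {a} ∩ g a ⁻¹' {c}) := by
    ext ω
    simp only [Set.mem_preimage, Set.mem_singleton_iff, Set.mem_iUnion, Set.mem_inter_iff]
    exact ⟨fun h => ⟨N ω, rfl, h⟩, fun ⟨a, ha, h⟩ => by rw [ha]; exact h⟩
  rw [h]
  exact MeasurableSet.iUnion fun a =>
    (hN (measurableSet_singleton a)).inter (hg a (measurableSet_singleton c))

lemma bgwBlk_subset_past (a b : Fin p → ℕ) (m : ℕ) :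
    bgwBlk a b (m + 1) ⊆ bgwPast p (m + 1) := fun x hx => by
  simp only [bgwPast, Set.mem_setOf_eq, hx.1, le_refl]

variable {Z : (Fin p → ℕ) → ℕ → Ω → Fin p → ℕ}

lemma bgwZ_step (hZ : ∀ z n ω, Z z (n + 1) ω =
      ξ (fun j => ∑ i, ∑ k ∈ Finset.range (Z z n ω i), V i j k (n + 1) ω))
    (z : Fin p → ℕ) (m : ℕ) (ω : Ω) :
    Z z (m + 1) ω = bgwStep ξ V 0 (Z z m ω) (m + 1) ω := by
  rw [hZ]
  unfold bgwStep
  simp only [Pi.zero_apply, zero_add]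

lemma measurable_Z_sig (hZ0 : ∀ z ω, Z z 0 ω = z)
    (hZ : ∀ z n ω, Z z (n + 1) ω =
      ξ (fun j => ∑ i, ∑ k ∈ Finset.range (Z z n ω i), V i j k (n + 1) ω)) :
    ∀ (m : ℕ) (z : Fin p → ℕ), Measurable[bgwSig V (bgwPast p m)] (Z z m) := by
  intro m
  induction m with
  | zero =>
    intro z
    have : Z z 0 = fun _ => z := funext (hZ0 z)
    rw [this]; exact measurable_const
  | succ m ih =>
    intro z
    have h : Z z (m + 1) = fun ω => bgwStep ξ V 0 (Z z m ω) (m + 1) ω :=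
      funext fun ω => bgwZ_step hZ z m ω
    rw [h]
    exact bgw_meas_param
      (fun a => (measurable_bgwStep_sig 0 a (m + 1)).mono
        (bgwSig_mono (bgwBlk_subset_past 0 a m)) le_rfl)
      ((ih z).mono (bgwSig_mono fun x hx => le_trans hx (Nat.le_succ m)) le_rfl)

lemma measurable_B_sig (hZ0 : ∀ z ω, Z z 0 ω = z)
    (hZ : ∀ z n ω, Z z (n + 1) ω =
      ξ (fun j => ∑ i, ∑ k ∈ Finset.range (Z z n ω i), V i j k (n + 1) ω))
    (z₀ z₀' : Fin p → ℕ) :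
    ∀ m : ℕ, Measurable[bgwSig V (bgwPast p m)] (bgwB ξ V (Z z₀) z₀' m) := by
  intro m
  induction m with
  | zero => exact measurable_const
  | succ m ih =>
    show Measurable[bgwSig V (bgwPast p (m + 1))]
      fun ω => bgwStep ξ V (Z z₀ m ω) (bgwB ξ V (Z z₀) z₀' m ω) (m + 1) ω
    exact bgw_meas_param (α := (Fin p → ℕ) × (Fin p → ℕ))
      (g := fun ab => bgwStep ξ V ab.1 ab.2 (m + 1))
      (fun ab => (measurable_bgwStep_sig ab.1 ab.2 (m + 1)).mono
        (bgwSig_mono (bgwBlk_subset_past ab.1 ab.2 m)) le_rfl)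
      (Measurable.prodMk
        ((measurable_Z_sig hZ0 hZ m z₀).mono
          (bgwSig_mono fun x hx => le_trans hx (Nat.le_succ m)) le_rfl)
        (ih.mono (bgwSig_mono fun x hx => le_trans hx (Nat.le_succ m)) le_rfl))

lemma bgw_indep_sig
    (hVmeas : ∀ i j k n, Measurable (V i j k n))
    (hVindep : iIndepFun
      (fun x : Fin p × ℕ × ℕ => fun ω => fun j => V x.1 j x.2.1 x.2.2 ω) μ)
    {S T : Set (Fin p × ℕ × ℕ)} (hST : Disjoint S T)
    {E F : Set Ω} (hE : MeasurableSet[bgwSig V S] E) (hF : MeasurableSet[bgwSig V T] F) :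
    μ (E ∩ F) = μ E * μ F := by
  have h : Indep (bgwSig V S) (bgwSig V T) μ :=
    indep_iSup_of_disjoint (fun x => (bgwFam_meas hVmeas x).comap_le) hVindep hST
  exact (Indep_iff _ _ _).1 h E F hE hF

lemma bgw_disjoint_past_blk (a b : Fin p → ℕ) (m : ℕ) :
    Disjoint (bgwPast p m) (bgwBlk a b (m + 1)) :=
  Set.disjoint_left.2 fun x hx1 hx2 => by
    simp only [bgwPast, Set.mem_setOf_eq] at hx1
    have := hx2.1
    omega

lemma bgw_disjoint_blk (a b : Fin p → ℕ) (t : ℕ) :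
    Disjoint (bgwBlk 0 a t) (bgwBlk a b t) :=
  Set.disjoint_left.2 fun x hx1 hx2 => by
    have h1 := hx1.2.2
    have h2 := hx2.2.1
    simp only [Pi.zero_apply] at h1
    omega

/-- Three-way product rule: past, low block, high block. -/
lemma bgw_mul3
    (hVmeas : ∀ i j k n, Measurable (V i j k n))
    (hVindep : iIndepFun
      (fun x : Fin p × ℕ × ℕ => fun ω => fun j => V x.1 j x.2.1 x.2.2 ω) μ)
    {a b : Fin p → ℕ} {m : ℕ} {E F G : Set Ω}
    (hE : MeasurableSet[bgwSig V (bgwPast p m)] E)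
    (hF : MeasurableSet[bgwSig V (bgwBlk 0 a (m + 1))] F)
    (hG : MeasurableSet[bgwSig V (bgwBlk a b (m + 1))] G) :
    μ (E ∩ (F ∩ G)) = μ E * (μ F * μ G) := by
  have hFG : MeasurableSet[bgwSig V (bgwBlk 0 a (m + 1) ∪ bgwBlk a b (m + 1))] (F ∩ G) := by
    have h1 : bgwSig V (bgwBlk 0 a (m + 1)) ≤
        bgwSig V (bgwBlk 0 a (m + 1) ∪ bgwBlk a b (m + 1)) :=
      bgwSig_mono Set.subset_union_left
    have h2 : bgwSig V (bgwBlk a b (m + 1)) ≤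
        bgwSig V (bgwBlk 0 a (m + 1) ∪ bgwBlk a b (m + 1)) :=
      bgwSig_mono Set.subset_union_right
    exact (h1 _ hF).inter (h2 _ hG)
  have hd : Disjoint (bgwPast p m) (bgwBlk 0 a (m + 1) ∪ bgwBlk a b (m + 1)) :=
    Set.disjoint_union_right.2 ⟨bgw_disjoint_past_blk 0 a m, bgw_disjoint_past_blk a b m⟩
  rw [bgw_indep_sig hVmeas hVindep hd hE hFG,
    bgw_indep_sig hVmeas hVindep (bgw_disjoint_blk a b (m + 1)) hF hG]

/-- decomposition of a measure over the fibers of a countable-valued map -/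
lemma bgw_fiber {β : Type*} [Countable β] [MeasurableSpace β] [MeasurableSingletonClass β]
    {f : Ω → β} (hf : Measurable f) {U : Set Ω} (hU : MeasurableSet U) :
    μ U = ∑' b : β, μ (U ∩ f ⁻¹' {b}) := by
  have h : U = ⋃ b : β, U ∩ f ⁻¹' {b} := by
    ext ω; simp
  conv_lhs => rw [h]
  rw [measure_iUnion]
  · intro b b' hbb'
    simp only [Function.onFun, Set.disjoint_left]
    rintro ω ⟨-, h1⟩ ⟨-, h2⟩
    simp only [Set.mem_preimage, Set.mem_singleton_iff] at h1 h2
    exact hbb' (h1.symm.trans h2)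
  · exact fun b => hU.inter (hf (measurableSet_singleton b))

/-- Shift invariance: the law of one step does not depend on the offset `a`. -/
lemma bgwStep_shift
    (hVmeas : ∀ i j k n, Measurable (V i j k n))
    (hVindep : iIndepFun
      (fun x : Fin p × ℕ × ℕ => fun ω => fun j => V x.1 j x.2.1 x.2.2 ω) μ)
    (hVident : ∀ i k n, IdentDistrib (fun ω => fun j => V i j k n ω)
      (fun ω => fun j => V i j 0 0 ω) μ μ)
    (a b : Fin p → ℕ) (t : ℕ) (c : Fin p → ℕ) :
    μ (bgwStep ξ V a b t ⁻¹' {c}) = μ (bgwStep ξ V 0 b t ⁻¹' {c}) := by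
  classical
  set K := Finset.univ.sup b with hK
  set D : Finset (Fin p × ℕ) := Finset.univ ×ˢ Finset.range K with hD
  by_cases hne : Nonempty ↥D
  swap
  · -- degenerate case: all `b i = 0` (or `p = 0`); both step functions coincide
    have hb : ∀ i : Fin p, b i = 0 := by
      intro i
      by_contra hbi
      exact hne ⟨⟨(i, 0), by
        simp only [hD, Finset.mem_product, Finset.mem_univ, true_and, Finset.mem_range]
        have : b i ≤ K := Finset.le_sup (Finset.mem_univ i)
        omega⟩⟩
    have : bgwStep ξ V a b t = bgwStep ξ V 0 b t := by
      funext ω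
      unfold bgwStep
      apply congrArg ξ
      funext j
      refine Finset.sum_congr rfl fun i _ => ?_
      rw [hb i]
      simp
    rw [this]
  · -- main case
    -- tuple maps
    set T : (Fin p → ℕ) → Ω → (↥D → (Fin q → ℕ)) :=
      fun a' ω x => fun j => V x.1.1 j (a' x.1.1 + x.1.2) t ω with hT
    set H : (↥D → (Fin q → ℕ)) → (Fin p → ℕ) := fun w =>
      ξ (fun j => ∑ i, ∑ k ∈ Finset.range (b i),
        (if h : (i, k) ∈ D then w ⟨(i, k), h⟩ else 0) j) with hH
    have hcomp : ∀ a' : Fin p → ℕ, bgwStep ξ V a' b t = fun ω => H (T a' ω) := by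
      intro a'
      funext ω
      unfold bgwStep
      simp only [hH, hT]
      apply congrArg ξ
      funext j
      refine Finset.sum_congr rfl fun i _ => Finset.sum_congr rfl fun k hk => ?_
      have hmem : (i, k) ∈ D := by
        simp only [hD, Finset.mem_product, Finset.mem_univ, true_and, Finset.mem_range]
        have h1 : b i ≤ K := Finset.le_sup (Finset.mem_univ i)
        have h2 := Finset.mem_range.1 hk
        omega
      rw [dif_pos hmem]
    -- law of singleton fibers of the tuple maps
    have hsingle : ∀ (a' : Fin p → ℕ) (w : ↥D → (Fin q → ℕ)),
        μ (T a' ⁻¹' {w}) =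
          ∏ x ∈ D.attach, μ ((fun ω (j : Fin q) => V x.1.1 j 0 0 ω) ⁻¹' {w x}) := by
      intro a' w
      set e : ↥D → Fin p × ℕ × ℕ := fun x => (x.1.1, a' x.1.1 + x.1.2, t) with he
      have hinj : Function.Injective e := by
        intro x y hxy
        simp only [he, Prod.mk.injEq] at hxy
        apply Subtype.ext
        have h1 := hxy.1
        have h2 := hxy.2.1
        rw [h1] at h2
        exact Prod.ext_iff.2 ⟨h1, by omega⟩
      set sets : Fin p × ℕ × ℕ → Set (Fin q → ℕ) := fun y => {w (Function.invFun e y)}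
        with hsets
      have hpre : T a' ⁻¹' {w} =
          ⋂ y ∈ D.attach.image e,
            (fun x : Fin p × ℕ × ℕ => fun ω (j : Fin q) => V x.1 j x.2.1 x.2.2 ω) y ⁻¹' sets y := by
        rw [Finset.set_biInter_finset_image]
        ext ω
        simp only [Set.mem_preimage, Set.mem_singleton_iff, Set.mem_iInter]
        constructor
        · intro hw x _
          simp only [hsets, Set.mem_singleton_iff]
          rw [Function.leftInverse_invFun hinj x, ← hw]
        · intro hw
          funext x
          have h2 := hw x (Finset.mem_attach _ _)
          simp only [hsets, Set.mem_singleton_iff] at h2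
          rw [Function.leftInverse_invFun hinj x] at h2
          exact h2
      rw [hpre, hVindep.measure_inter_preimage_eq_mul (D.attach.image e)
        (fun y _ => measurableSet_singleton _)]
      rw [Finset.prod_image (fun x _ y _ h => hinj h)]
      refine Finset.prod_congr rfl fun x _ => ?_
      rw [show Function.invFun e (e x) = x from Function.leftInverse_invFun hinj x]
      exact (hVident x.1.1 (a' x.1.1 + x.1.2) t).measure_mem_eq (measurableSet_singleton _)
    -- measures of arbitrary preimages of the tuple maps agree
    have hTmeas : ∀ a' : Fin p → ℕ, Measurable (T a') := fun a' =>
      measurable_pi_lambda _ fun x => measurable_pi_lambda _ fun j => hVmeas _ _ _ _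
    have hU : ∀ U : Set (↥D → (Fin q → ℕ)),
        μ (T a ⁻¹' U) = μ (T 0 ⁻¹' U) := by
      intro U
      have hdec : ∀ a' : Fin p → ℕ,
          μ (T a' ⁻¹' U) = ∑' w : ↥U, μ (T a' ⁻¹' {(w : ↥D → (Fin q → ℕ))}) := by
        intro a'
        have h : T a' ⁻¹' U = ⋃ w : ↥U, T a' ⁻¹' {(w : ↥D → (Fin q → ℕ))} := by
          ext ω
          simp only [Set.mem_preimage, Set.mem_iUnion, Set.mem_singleton_iff]
          exact ⟨fun h => ⟨⟨T a' ω, h⟩, rfl⟩, fun ⟨w, hw⟩ => hw ▸ w.2⟩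
        rw [h]
        rw [measure_iUnion]
        · intro w w' hww'
          simp only [Function.onFun, Set.disjoint_left, Set.mem_preimage,
            Set.mem_singleton_iff]
          intro ω h1 h2
          exact hww' (Subtype.ext (h1.symm.trans h2))
        · exact fun w => (hTmeas a') (measurableSet_singleton _)
      rw [hdec a, hdec 0]
      exact tsum_congr fun w => by rw [hsingle a, hsingle 0]
    have h1 : bgwStep ξ V a b t ⁻¹' {c} = T a ⁻¹' (H ⁻¹' {c}) := by
      rw [hcomp a]; rfl
    have h2 : bgwStep ξ V 0 b t ⁻¹' {c} = T 0 ⁻¹' (H ⁻¹' {c}) := by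
      rw [hcomp 0]; rfl
    rw [h1, h2, hU]

end bGWaux

section bGWmain

variable {Ω : Type*} [MeasurableSpace Ω] {μ : Measure Ω} {p q : ℕ}
variable {ξ : (Fin q → ℕ) → (Fin p → ℕ)} {V : Fin p → Fin q → ℕ → ℕ → Ω → ℕ}
variable {Z : (Fin p → ℕ) → ℕ → Ω → Fin p → ℕ}

/-- monotonicity of a superadditive mating function -/
lemma bgw_xi_mono (hξsuper : ∀ x y : Fin q → ℕ, ξ x + ξ y ≤ ξ (x + y))
    {x y : Fin q → ℕ} (h : x ≤ y) : ξ x ≤ ξ y := by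
  have h2 := hξsuper x (y - x)
  have hxy : x + (y - x) = y := funext fun j => by
    have hj : x j ≤ y j := h j
    simp only [Pi.add_apply, Pi.sub_apply]
    omega
  rw [hxy] at h2
  exact le_trans (le_add_of_nonneg_right zero_le) h2

/-- the coupling inequality -/
lemma bgw_couple (hξsuper : ∀ x y : Fin q → ℕ, ξ x + ξ y ≤ ξ (x + y))
    (hZ0 : ∀ z ω, Z z 0 ω = z)
    (hZ : ∀ z n ω, Z z (n + 1) ω =
      ξ (fun j => ∑ i, ∑ k ∈ Finset.range (Z z n ω i), V i j k (n + 1) ω))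
    (z₀ z₀' : Fin p → ℕ) :
    ∀ (m : ℕ) (ω : Ω), Z z₀ m ω + bgwB ξ V (Z z₀) z₀' m ω ≤ Z (z₀ + z₀') m ω := by
  intro m
  induction m with
  | zero =>
    intro ω
    rw [hZ0, hZ0]
    exact le_of_eq rfl
  | succ m ih =>
    intro ω
    have hB : bgwB ξ V (Z z₀) z₀' (m + 1) ω =
        bgwStep ξ V (Z z₀ m ω) (bgwB ξ V (Z z₀) z₀' m ω) (m + 1) ω := rfl
    rw [hB, hZ, hZ]
    unfold bgwStep
    refine le_trans (hξsuper _ _) (bgw_xi_mono hξsuper ?_)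
    intro j
    simp only [Pi.add_apply]
    rw [← Finset.sum_add_distrib]
    refine Finset.sum_le_sum fun i _ => ?_
    rw [← Finset.sum_range_add]
    apply Finset.sum_le_sum_of_subset
    apply Finset.range_subset_range.2
    exact ih ω i

variable [IsProbabilityMeasure μ]

/-- main induction: the coupled process `B` is independent of `Z z₀` and distributed
like `Z z₀'`. -/
lemma bgw_key
    (hVmeas : ∀ i j k n, Measurable (V i j k n))
    (hVindep : iIndepFun
      (fun x : Fin p × ℕ × ℕ => fun ω => fun j => V x.1 j x.2.1 x.2.2 ω) μ)
    (hVident : ∀ i k n, IdentDistrib (fun ω => fun j => V i j k n ω)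
      (fun ω => fun j => V i j 0 0 ω) μ μ)
    (hZ0 : ∀ z ω, Z z 0 ω = z)
    (hZ : ∀ z n ω, Z z (n + 1) ω =
      ξ (fun j => ∑ i, ∑ k ∈ Finset.range (Z z n ω i), V i j k (n + 1) ω))
    (z₀ z₀' : Fin p → ℕ) :
    ∀ (m : ℕ) (a b : Fin p → ℕ),
      μ {ω | Z z₀ m ω = a ∧ bgwB ξ V (Z z₀) z₀' m ω = b} =
        μ {ω | Z z₀ m ω = a} * μ {ω | Z z₀' m ω = b} := by
  classical
  have hAmeas : ∀ (m' : ℕ) (z : Fin p → ℕ), Measurable (Z z m') := fun m' z =>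
    (measurable_Z_sig hZ0 hZ m' z).mono (bgwSig_le hVmeas _) le_rfl
  have hBmeas : ∀ m', Measurable (bgwB ξ V (Z z₀) z₀' m') := fun m' =>
    (measurable_B_sig hZ0 hZ z₀ z₀' m').mono (bgwSig_le hVmeas _) le_rfl
  intro m
  induction m with
  | zero =>
    intro a b
    by_cases ha : z₀ = a
    · by_cases hb : z₀' = b
      · subst ha; subst hb
        simp [hZ0, bgwB]
      · simp [hZ0, bgwB, hb]
    · simp [hZ0, bgwB, ha]
  | succ m ih =>
    intro a' b'
    set f : (Fin p → ℕ) → ℝ≥0∞ :=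
      fun a => μ {ω | Z z₀ m ω = a} * μ (bgwStep ξ V 0 a (m + 1) ⁻¹' {a'}) with hf
    set g : (Fin p → ℕ) → ℝ≥0∞ :=
      fun b => μ {ω | Z z₀' m ω = b} * μ (bgwStep ξ V 0 b (m + 1) ⁻¹' {b'}) with hg
    -- LHS decomposition over the fibers of the pair at time m
    have hfib : Measurable (fun ω => (Z z₀ m ω, bgwB ξ V (Z z₀) z₀' m ω)) :=
      (hAmeas m z₀).prodMk (hBmeas m)
    have hUmeas : MeasurableSet {ω | Z z₀ (m + 1) ω = a' ∧ bgwB ξ V (Z z₀) z₀' (m + 1) ω = b'} := by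
      have h : {ω | Z z₀ (m + 1) ω = a' ∧ bgwB ξ V (Z z₀) z₀' (m + 1) ω = b'} =
          (Z z₀ (m + 1)) ⁻¹' {a'} ∩ (bgwB ξ V (Z z₀) z₀' (m + 1)) ⁻¹' {b'} := rfl
      rw [h]
      exact ((hAmeas (m + 1) z₀) (measurableSet_singleton _)).inter
        ((hBmeas (m + 1)) (measurableSet_singleton _))
    have hLHS := bgw_fiber (μ := μ) hfib hUmeas
    -- each term factorizes
    have hterm : ∀ ab : (Fin p → ℕ) × (Fin p → ℕ),
        μ ({ω | Z z₀ (m + 1) ω = a' ∧ bgwB ξ V (Z z₀) z₀' (m + 1) ω = b'} ∩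
            (fun ω => (Z z₀ m ω, bgwB ξ V (Z z₀) z₀' m ω)) ⁻¹' {ab}) = f ab.1 * g ab.2 := by
      rintro ⟨a, b⟩
      have hset : {ω | Z z₀ (m + 1) ω = a' ∧ bgwB ξ V (Z z₀) z₀' (m + 1) ω = b'} ∩
            (fun ω => (Z z₀ m ω, bgwB ξ V (Z z₀) z₀' m ω)) ⁻¹' {(a, b)} =
          ((fun ω => (Z z₀ m ω, bgwB ξ V (Z z₀) z₀' m ω)) ⁻¹' {(a, b)}) ∩
            ((bgwStep ξ V 0 a (m + 1) ⁻¹' {a'}) ∩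
              (bgwStep ξ V a b (m + 1) ⁻¹' {b'})) := by
        ext ω
        simp only [Set.mem_inter_iff, Set.mem_setOf_eq, Set.mem_preimage,
          Set.mem_singleton_iff, Prod.ext_iff]
        have e1 : Z z₀ (m + 1) ω = bgwStep ξ V 0 (Z z₀ m ω) (m + 1) ω := bgwZ_step hZ z₀ m ω
        have e2 : bgwB ξ V (Z z₀) z₀' (m + 1) ω =
            bgwStep ξ V (Z z₀ m ω) (bgwB ξ V (Z z₀) z₀' m ω) (m + 1) ω := rfl
        constructor
        · rintro ⟨⟨h1, h2⟩, h3, h4⟩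
          rw [e1, h3] at h1
          rw [e2, h3, h4] at h2
          exact ⟨⟨h3, h4⟩, h1, h2⟩
        · rintro ⟨⟨h3, h4⟩, h1, h2⟩
          refine ⟨⟨?_, ?_⟩, h3, h4⟩
          · rw [e1, h3]; exact h1
          · rw [e2, h3, h4]; exact h2
      rw [hset]
      have hEmeas : MeasurableSet[bgwSig V (bgwPast p m)]
          ((fun ω => (Z z₀ m ω, bgwB ξ V (Z z₀) z₀' m ω)) ⁻¹' {(a, b)}) := by
        have hmp : Measurable[bgwSig V (bgwPast p m)]
            (fun ω => (Z z₀ m ω, bgwB ξ V (Z z₀) z₀' m ω)) :=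
          Measurable.prodMk (measurable_Z_sig hZ0 hZ m z₀) (measurable_B_sig hZ0 hZ z₀ z₀' m)
        exact hmp (measurableSet_singleton _)
      have hFmeas : MeasurableSet[bgwSig V (bgwBlk 0 a (m + 1))]
          (bgwStep ξ V 0 a (m + 1) ⁻¹' {a'}) :=
        (measurable_bgwStep_sig 0 a (m + 1)) (measurableSet_singleton _)
      have hGmeas : MeasurableSet[bgwSig V (bgwBlk a b (m + 1))]
          (bgwStep ξ V a b (m + 1) ⁻¹' {b'}) :=
        (measurable_bgwStep_sig a b (m + 1)) (measurableSet_singleton _)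
      rw [bgw_mul3 hVmeas hVindep hEmeas hFmeas hGmeas]
      have hfibeq : ((fun ω => (Z z₀ m ω, bgwB ξ V (Z z₀) z₀' m ω)) ⁻¹' {(a, b)}) =
          {ω | Z z₀ m ω = a ∧ bgwB ξ V (Z z₀) z₀' m ω = b} := by
        ext ω
        simp [Prod.ext_iff]
      rw [hfibeq, ih a b, bgwStep_shift hVmeas hVindep hVident a b (m + 1) b']
      simp only [hf, hg]
      ring
    -- RHS decompositions
    have hRA : μ {ω | Z z₀ (m + 1) ω = a'} = ∑' a : Fin p → ℕ, f a := by
      have h0 : MeasurableSet {ω | Z z₀ (m + 1) ω = a'} :=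
        (hAmeas (m + 1) z₀) (measurableSet_singleton a')
      rw [bgw_fiber (hAmeas m z₀) h0]
      refine tsum_congr fun a => ?_
      have hset : {ω | Z z₀ (m + 1) ω = a'} ∩ Z z₀ m ⁻¹' {a} =
          (Z z₀ m ⁻¹' {a}) ∩ (bgwStep ξ V 0 a (m + 1) ⁻¹' {a'}) := by
        ext ω
        simp only [Set.mem_inter_iff, Set.mem_setOf_eq, Set.mem_preimage,
          Set.mem_singleton_iff]
        have e1 : Z z₀ (m + 1) ω = bgwStep ξ V 0 (Z z₀ m ω) (m + 1) ω := bgwZ_step hZ z₀ m ω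
        constructor
        · rintro ⟨h1, h3⟩
          rw [e1, h3] at h1
          exact ⟨h3, h1⟩
        · rintro ⟨h3, h1⟩
          refine ⟨?_, h3⟩
          rw [e1, h3]
          exact h1
      rw [hset, bgw_indep_sig hVmeas hVindep (bgw_disjoint_past_blk 0 a m)
        ((measurable_Z_sig hZ0 hZ m z₀) (measurableSet_singleton a))
        ((measurable_bgwStep_sig 0 a (m + 1)) (measurableSet_singleton _))]
      rfl
    have hRC : μ {ω | Z z₀' (m + 1) ω = b'} = ∑' b : Fin p → ℕ, g b := by
      have h0 : MeasurableSet {ω | Z z₀' (m + 1) ω = b'} :=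
        (hAmeas (m + 1) z₀') (measurableSet_singleton b')
      rw [bgw_fiber (hAmeas m z₀') h0]
      refine tsum_congr fun b => ?_
      have hset : {ω | Z z₀' (m + 1) ω = b'} ∩ Z z₀' m ⁻¹' {b} =
          (Z z₀' m ⁻¹' {b}) ∩ (bgwStep ξ V 0 b (m + 1) ⁻¹' {b'}) := by
        ext ω
        simp only [Set.mem_inter_iff, Set.mem_setOf_eq, Set.mem_preimage,
          Set.mem_singleton_iff]
        have e1 : Z z₀' (m + 1) ω = bgwStep ξ V 0 (Z z₀' m ω) (m + 1) ω := bgwZ_step hZ z₀' m ω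
        constructor
        · rintro ⟨h1, h3⟩
          rw [e1, h3] at h1
          exact ⟨h3, h1⟩
        · rintro ⟨h3, h1⟩
          refine ⟨?_, h3⟩
          rw [e1, h3]
          exact h1
      rw [hset, bgw_indep_sig hVmeas hVindep (bgw_disjoint_past_blk 0 b m)
        ((measurable_Z_sig hZ0 hZ m z₀') (measurableSet_singleton b))
        ((measurable_bgwStep_sig 0 b (m + 1)) (measurableSet_singleton _))]
      rfl
    rw [hLHS, hRA, hRC, ENNReal.tsum_prod']
    calc ∑' (a : Fin p → ℕ) (b : Fin p → ℕ),
          μ ({ω | Z z₀ (m + 1) ω = a' ∧ bgwB ξ V (Z z₀) z₀' (m + 1) ω = b'} ∩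
            (fun ω => (Z z₀ m ω, bgwB ξ V (Z z₀) z₀' m ω)) ⁻¹' {(a, b)})
        = ∑' (a : Fin p → ℕ) (b : Fin p → ℕ), f a * g b := by
          refine tsum_congr fun a => tsum_congr fun b => hterm (a, b)
      _ = (∑' a : Fin p → ℕ, f a) * ∑' b : Fin p → ℕ, g b := by
          rw [← ENNReal.tsum_mul_right]
          refine tsum_congr fun a => ?_
          rw [ENNReal.tsum_mul_left]

end bGWmain

/-- Superadditivity of the multi-type bisexual Galton–Watson process: for all initial
conditions `z₀, z̃₀` and targets `z₁, z̃₁` in `ℕ^p` and all `n ≥ 1`,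
`P(Zₙ ≥ z₁ + z̃₁ | Z₀ = z₀ + z̃₀) ≥ P(Zₙ ≥ z₁ | Z₀ = z₀) · P(Zₙ ≥ z̃₁ | Z₀ = z̃₀)`. -/
theorem bGW_superadditivity {Ω : Type*} [MeasurableSpace Ω]
    (μ : Measure Ω) [IsProbabilityMeasure μ] {p q : ℕ}
    (ξ : (Fin q → ℕ) → (Fin p → ℕ))
    (hξsuper : ∀ x y : Fin q → ℕ, ξ x + ξ y ≤ ξ (x + y))
    (hξ0 : ξ 0 = 0)
    (V : Fin p → Fin q → ℕ → ℕ → Ω → ℕ)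
    (hVmeas : ∀ i j k n, Measurable (V i j k n))
    (hVindep : iIndepFun
      (fun x : Fin p × ℕ × ℕ => fun ω => fun j => V x.1 j x.2.1 x.2.2 ω) μ)
    (hVident : ∀ i k n, IdentDistrib (fun ω => fun j => V i j k n ω)
      (fun ω => fun j => V i j 0 0 ω) μ μ)
    -- the process started from an arbitrary initial condition z
    (Z : (Fin p → ℕ) → ℕ → Ω → Fin p → ℕ)
    (hZ0 : ∀ z ω, Z z 0 ω = z)
    (hZ : ∀ z n ω, Z z (n + 1) ω =
      ξ (fun j => ∑ i, ∑ k ∈ Finset.range (Z z n ω i), V i j k (n + 1) ω)) :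
    ∀ z₀ z₀' z₁ z₁' : Fin p → ℕ, ∀ n : ℕ, 1 ≤ n →
      μ {ω | z₁ ≤ Z z₀ n ω} * μ {ω | z₁' ≤ Z z₀' n ω}
        ≤ μ {ω | z₁ + z₁' ≤ Z (z₀ + z₀') n ω} := by
  classical
  intro z₀ z₀' z₁ z₁' n _
  have hAmeas : ∀ (m : ℕ) (z : Fin p → ℕ), Measurable (Z z m) := fun m z =>
    (measurable_Z_sig hZ0 hZ m z).mono (bgwSig_le hVmeas _) le_rfl
  have hBmeas : ∀ m, Measurable (bgwB ξ V (Z z₀) z₀' m) := fun m =>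
    (measurable_B_sig hZ0 hZ z₀ z₀' m).mono (bgwSig_le hVmeas _) le_rfl
  have hkey := bgw_key hVmeas hVindep hVident hZ0 hZ z₀ z₀' n
  -- measurable sets of the form {z ≤ ·}
  have hsle : ∀ (X : Ω → Fin p → ℕ), Measurable X → ∀ z : Fin p → ℕ,
      MeasurableSet {ω | z ≤ X ω} := by
    intro X hX z
    have h : {ω | z ≤ X ω} = X ⁻¹' {y | z ≤ y} := rfl
    rw [h]
    exact hX (Set.to_countable _).measurableSet
  -- product formula for the coupled event
  have hprod : μ {ω | z₁ ≤ Z z₀ n ω ∧ z₁' ≤ bgwB ξ V (Z z₀) z₀' n ω} =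
      μ {ω | z₁ ≤ Z z₀ n ω} * μ {ω | z₁' ≤ Z z₀' n ω} := by
    have hfib : Measurable (fun ω => (Z z₀ n ω, bgwB ξ V (Z z₀) z₀' n ω)) :=
      (hAmeas n z₀).prodMk (hBmeas n)
    have hUmeas : MeasurableSet {ω | z₁ ≤ Z z₀ n ω ∧ z₁' ≤ bgwB ξ V (Z z₀) z₀' n ω} := by
      have h : {ω | z₁ ≤ Z z₀ n ω ∧ z₁' ≤ bgwB ξ V (Z z₀) z₀' n ω} =
          {ω | z₁ ≤ Z z₀ n ω} ∩ {ω | z₁' ≤ bgwB ξ V (Z z₀) z₀' n ω} := rfl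
      rw [h]
      exact (hsle _ (hAmeas n z₀) z₁).inter (hsle _ (hBmeas n) z₁')
    rw [bgw_fiber hfib hUmeas]
    have hterm : ∀ ab : (Fin p → ℕ) × (Fin p → ℕ),
        μ ({ω | z₁ ≤ Z z₀ n ω ∧ z₁' ≤ bgwB ξ V (Z z₀) z₀' n ω} ∩
            (fun ω => (Z z₀ n ω, bgwB ξ V (Z z₀) z₀' n ω)) ⁻¹' {ab}) =
          (if z₁ ≤ ab.1 then μ {ω | Z z₀ n ω = ab.1} else 0) *
            (if z₁' ≤ ab.2 then μ {ω | Z z₀' n ω = ab.2} else 0) := by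
      rintro ⟨a, b⟩
      by_cases h1 : z₁ ≤ a
      · by_cases h2 : z₁' ≤ b
        · have hset : {ω | z₁ ≤ Z z₀ n ω ∧ z₁' ≤ bgwB ξ V (Z z₀) z₀' n ω} ∩
              (fun ω => (Z z₀ n ω, bgwB ξ V (Z z₀) z₀' n ω)) ⁻¹' {(a, b)} =
              {ω | Z z₀ n ω = a ∧ bgwB ξ V (Z z₀) z₀' n ω = b} := by
            ext ω
            simp only [Set.mem_inter_iff, Set.mem_setOf_eq, Set.mem_preimage,
              Set.mem_singleton_iff, Prod.ext_iff]
            constructor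
            · rintro ⟨-, h3, h4⟩; exact ⟨h3, h4⟩
            · rintro ⟨h3, h4⟩
              exact ⟨⟨h3 ▸ h1, h4 ▸ h2⟩, h3, h4⟩
          rw [hset, hkey a b, if_pos h1, if_pos h2]
        · have hset : {ω | z₁ ≤ Z z₀ n ω ∧ z₁' ≤ bgwB ξ V (Z z₀) z₀' n ω} ∩
              (fun ω => (Z z₀ n ω, bgwB ξ V (Z z₀) z₀' n ω)) ⁻¹' {(a, b)} = (∅ : Set Ω) := by
            ext ω
            simp only [Set.mem_inter_iff, Set.mem_setOf_eq, Set.mem_preimage,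
              Set.mem_singleton_iff, Prod.ext_iff, Set.mem_empty_iff_false, iff_false]
            rintro ⟨⟨hw1, hw2⟩, h3, h4⟩
            exact h2 (h4 ▸ hw2)
          rw [hset, if_neg h2]
          simp
      · have hset : {ω | z₁ ≤ Z z₀ n ω ∧ z₁' ≤ bgwB ξ V (Z z₀) z₀' n ω} ∩
            (fun ω => (Z z₀ n ω, bgwB ξ V (Z z₀) z₀' n ω)) ⁻¹' {(a, b)} = (∅ : Set Ω) := by
          ext ω
          simp only [Set.mem_inter_iff, Set.mem_setOf_eq, Set.mem_preimage,
            Set.mem_singleton_iff, Prod.ext_iff, Set.mem_empty_iff_false, iff_false]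
          rintro ⟨⟨hw1, hw2⟩, h3, h4⟩
          exact h1 (h3 ▸ hw1)
        rw [hset, if_neg h1]
        simp
    have hAdec : μ {ω | z₁ ≤ Z z₀ n ω} =
        ∑' a : Fin p → ℕ, (if z₁ ≤ a then μ {ω | Z z₀ n ω = a} else 0) := by
      rw [bgw_fiber (hAmeas n z₀) (hsle _ (hAmeas n z₀) z₁)]
      refine tsum_congr fun a => ?_
      by_cases h1 : z₁ ≤ a
      · rw [if_pos h1]
        congr 1
        ext ω
        simp only [Set.mem_inter_iff, Set.mem_setOf_eq, Set.mem_preimage,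
          Set.mem_singleton_iff]
        exact ⟨fun h => h.2, fun h => ⟨h ▸ h1, h⟩⟩
      · rw [if_neg h1]
        have h : {ω | z₁ ≤ Z z₀ n ω} ∩ Z z₀ n ⁻¹' {a} = (∅ : Set Ω) := by
          ext ω
          simp only [Set.mem_inter_iff, Set.mem_setOf_eq, Set.mem_preimage,
            Set.mem_singleton_iff, Set.mem_empty_iff_false, iff_false, not_and]
          intro hw h3
          exact h1 (h3 ▸ hw)
        rw [h]
        simp
    have hCdec : μ {ω | z₁' ≤ Z z₀' n ω} =
        ∑' b : Fin p → ℕ, (if z₁' ≤ b then μ {ω | Z z₀' n ω = b} else 0) := by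
      rw [bgw_fiber (hAmeas n z₀') (hsle _ (hAmeas n z₀') z₁')]
      refine tsum_congr fun b => ?_
      by_cases h2 : z₁' ≤ b
      · rw [if_pos h2]
        congr 1
        ext ω
        simp only [Set.mem_inter_iff, Set.mem_setOf_eq, Set.mem_preimage,
          Set.mem_singleton_iff]
        exact ⟨fun h => h.2, fun h => ⟨h ▸ h2, h⟩⟩
      · rw [if_neg h2]
        have h : {ω | z₁' ≤ Z z₀' n ω} ∩ Z z₀' n ⁻¹' {b} = (∅ : Set Ω) := by
          ext ω
          simp only [Set.mem_inter_iff, Set.mem_setOf_eq, Set.mem_preimage,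
            Set.mem_singleton_iff, Set.mem_empty_iff_false, iff_false, not_and]
          intro hw h3
          exact h2 (h3 ▸ hw)
        rw [h]
        simp
    rw [hAdec, hCdec, ENNReal.tsum_prod']
    calc ∑' (a : Fin p → ℕ) (b : Fin p → ℕ),
          μ ({ω | z₁ ≤ Z z₀ n ω ∧ z₁' ≤ bgwB ξ V (Z z₀) z₀' n ω} ∩
            (fun ω => (Z z₀ n ω, bgwB ξ V (Z z₀) z₀' n ω)) ⁻¹' {(a, b)})
        = ∑' (a : Fin p → ℕ) (b : Fin p → ℕ),
            (if z₁ ≤ a then μ {ω | Z z₀ n ω = a} else 0) *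
              (if z₁' ≤ b then μ {ω | Z z₀' n ω = b} else 0) := by
          refine tsum_congr fun a => tsum_congr fun b => hterm (a, b)
      _ = (∑' a : Fin p → ℕ, (if z₁ ≤ a then μ {ω | Z z₀ n ω = a} else 0)) *
            ∑' b : Fin p → ℕ, (if z₁' ≤ b then μ {ω | Z z₀' n ω = b} else 0) := by
          rw [← ENNReal.tsum_mul_right]
          refine tsum_congr fun a => ?_
          rw [ENNReal.tsum_mul_left]
  rw [← hprod]
  apply measure_mono
  intro ω hω
  have hcouple := bgw_couple hξsuper hZ0 hZ z₀ z₀' n ω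
  calc z₁ + z₁' ≤ Z z₀ n ω + bgwB ξ V (Z z₀) z₀' n ω := add_le_add hω.1 hω.2
    _ ≤ Z (z₀ + z₀') n ω := hcouple
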